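/- arXiv:1709.07685 — 2 statements merged into one kernel-verified Lean document; each statement's English description precedes it below -/
import Mathlib

section
/- Let N ≥ 5, 0 < s < 2, and for ε ∈ (0,1) define U_ε(x) = ε^((N−2)/(2(2−s))) (ε + |x|^(2−s))^((2−N)/(2−s)). Then for any fixed R > 0 there exists C > 0 (depending on N, s, R) such that ∫_{B_R(0)} U_ε(x)² dx ≤ C ε^(2/(2−s)) for all ε ∈ (0,1). -/
open MeasureTheory

/-- L² estimate for the truncated extremal profile when N ≥ 5:
∫_{B_R} U_ε² ≤ C ε^{2/(2−s)}. -/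
theorem stmt_9 (N : ℕ) (hN : 5 ≤ N) (s : ℝ) (hs : 0 < s) (hs2 : s < 2)
    (U : ℝ → EuclideanSpace ℝ (Fin N) → ℝ)
    (hU : ∀ ε ∈ Set.Ioo (0 : ℝ) 1, ∀ x, U ε x
      = ε ^ (((N : ℝ) - 2) / (2 * (2 - s))) * (ε + ‖x‖ ^ (2 - s)) ^ ((2 - (N : ℝ)) / (2 - s)))
    (R : ℝ) (hR : 0 < R) :
    ∃ C > (0 : ℝ), ∀ ε ∈ Set.Ioo (0 : ℝ) 1,
      (∫ x in Metric.ball (0 : EuclideanSpace ℝ (Fin N)) R, U ε x ^ 2)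
        ≤ C * ε ^ (2 / (2 - s)) := by
  have hq : (0:ℝ) < 2 - s := by linarith
  have hN5 : (5:ℝ) ≤ (N:ℝ) := by exact_mod_cast hN
  set p : ℝ := 2 * (N:ℝ) - 4 with hpdef
  have hNp : ((Module.finrank ℝ (EuclideanSpace ℝ (Fin N))) : ℝ) < p := by
    rw [finrank_euclideanSpace_fin]; simp only [hpdef]; linarith
  have hg : Integrable (fun y : EuclideanSpace ℝ (Fin N) => (1 + ‖y‖) ^ (-p)) :=
    integrable_one_add_norm hNp
  set C₀ : ℝ := ∫ y : EuclideanSpace ℝ (Fin N), (1 + ‖y‖) ^ (-p) with hC₀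
  have hC₀0 : 0 ≤ C₀ := integral_nonneg fun y => Real.rpow_nonneg (by positivity) _
  set c : ℝ := (2:ℝ) ^ (2 * (N:ℝ) - 4) with hcdef
  have hc0 : 0 < c := Real.rpow_pos_of_pos two_pos _
  refine ⟨c * C₀ + 1, by positivity, ?_⟩
  rintro ε ⟨hε, hε1⟩
  set lam : ℝ := ε ^ (2 - s)⁻¹ with hlam
  have hlam0 : 0 < lam := Real.rpow_pos_of_pos hε _
  have hlamq : lam ^ (2 - s) = ε := by
    rw [hlam, ← Real.rpow_mul hε.le, inv_mul_cancel₀ hq.ne', Real.rpow_one]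
  -- key pointwise comparison
  have key : ∀ x : EuclideanSpace ℝ (Fin N),
      (2:ℝ) ^ (s-2) * ε * (1 + ‖lam⁻¹ • x‖) ^ (2 - s) ≤ ε + ‖x‖ ^ (2 - s) := by
    intro x
    have hnx : ‖lam⁻¹ • x‖ = lam⁻¹ * ‖x‖ := by
      rw [norm_smul, Real.norm_eq_abs, abs_of_pos (inv_pos.2 hlam0)]
    set u := lam⁻¹ * ‖x‖ with hu
    have hu0 : 0 ≤ u := by positivity
    have hxu : ‖x‖ = lam * u := by rw [hu]; field_simp
    have hx2 : ‖x‖ ^ (2 - s) = ε * u ^ (2 - s) := by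
      rw [hxu, Real.mul_rpow hlam0.le hu0, hlamq]
    rw [hnx, hx2]
    have h2pos : (0:ℝ) < (2:ℝ) ^ (2 - s) := Real.rpow_pos_of_pos two_pos _
    have h1 : (1+u) ^ (2-s) ≤ 2 ^ (2-s) * (1 + u ^ (2-s)) := by
      have hupos : (0:ℝ) ≤ u ^ (2-s) := Real.rpow_nonneg hu0 _
      rcases le_total u 1 with h | h
      · calc (1+u) ^ (2-s) ≤ (2:ℝ) ^ (2-s) :=
              Real.rpow_le_rpow (by positivity) (by linarith) hq.le
          _ ≤ 2 ^ (2-s) * (1 + u ^ (2-s)) := by nlinarith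
      · calc (1+u) ^ (2-s) ≤ ((2:ℝ)*u) ^ (2-s) :=
              Real.rpow_le_rpow (by positivity) (by linarith) hq.le
          _ = 2 ^ (2-s) * u ^ (2-s) := Real.mul_rpow (by norm_num) hu0
          _ ≤ 2 ^ (2-s) * (1 + u ^ (2-s)) := by nlinarith
    have h2 : (2:ℝ) ^ (s-2) * (2:ℝ) ^ (2-s) = 1 := by
      rw [← Real.rpow_add two_pos]; norm_num
    have h3 : (2:ℝ) ^ (s-2) * ε * (1+u) ^ (2-s)
        ≤ (2:ℝ) ^ (s-2) * ε * (2 ^ (2-s) * (1 + u ^ (2-s))) :=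
      mul_le_mul_of_nonneg_left h1 (by positivity)
    calc (2:ℝ) ^ (s-2) * ε * (1+u) ^ (2-s)
        ≤ (2:ℝ) ^ (s-2) * ε * (2 ^ (2-s) * (1 + u ^ (2-s))) := h3
      _ = ((2:ℝ) ^ (s-2) * (2:ℝ) ^ (2-s)) * (ε * (1 + u ^ (2-s))) := by ring
      _ = ε + ε * u ^ (2-s) := by rw [h2]; ring
  -- pointwise bound for U ε x ^ 2
  have hpt : ∀ x : EuclideanSpace ℝ (Fin N),
      U ε x ^ 2 ≤ c * ε ^ ((2-(N:ℝ))/(2-s)) * (1 + ‖lam⁻¹ • x‖) ^ (-p) := by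
    intro x
    rw [hU ε ⟨hε, hε1⟩ x]
    have hB : (0:ℝ) < ε + ‖x‖ ^ (2-s) := by positivity
    have hT : (0:ℝ) < 1 + ‖lam⁻¹ • x‖ := by positivity
    have hβ0 : (2-(N:ℝ))/(2-s) * 2 ≤ 0 := by
      apply mul_nonpos_of_nonpos_of_nonneg _ (by norm_num)
      apply div_nonpos_of_nonpos_of_nonneg (by linarith) hq.le
    have expand : (ε + ‖x‖ ^ (2-s)) ^ (((2-(N:ℝ))/(2-s)) * 2)
        ≤ ((2:ℝ) ^ (s-2) * ε * (1 + ‖lam⁻¹ • x‖) ^ (2-s)) ^ (((2-(N:ℝ))/(2-s)) * 2) :=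
      Real.rpow_le_rpow_of_nonpos (by positivity) (key x) hβ0
    have e1 : ((2:ℝ) ^ (s-2)) ^ (((2-(N:ℝ))/(2-s)) * 2) = c := by
      rw [← Real.rpow_mul (by norm_num : (0:ℝ) ≤ 2), hcdef]
      congr 1
      field_simp
      ring
    have e2 : ((1 + ‖lam⁻¹ • x‖) ^ (2-s)) ^ (((2-(N:ℝ))/(2-s)) * 2)
        = (1 + ‖lam⁻¹ • x‖) ^ (-p) := by
      rw [← Real.rpow_mul hT.le, hpdef]
      congr 1
      field_simp
      ring
    have hsplit : ((2:ℝ) ^ (s-2) * ε * (1 + ‖lam⁻¹ • x‖) ^ (2-s)) ^ (((2-(N:ℝ))/(2-s)) * 2)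
        = c * ε ^ (((2-(N:ℝ))/(2-s)) * 2) * (1 + ‖lam⁻¹ • x‖) ^ (-p) := by
      rw [Real.mul_rpow (by positivity) (by positivity),
          Real.mul_rpow (by positivity) hε.le, e1, e2]
    calc (ε ^ (((N:ℝ)-2)/(2*(2-s))) * (ε + ‖x‖ ^ (2-s)) ^ ((2-(N:ℝ))/(2-s))) ^ 2
        = ε ^ ((((N:ℝ)-2)/(2*(2-s))) * 2)
            * (ε + ‖x‖ ^ (2-s)) ^ (((2-(N:ℝ))/(2-s)) * 2) := by
          rw [mul_pow, ← Real.rpow_natCast (ε ^ (((N:ℝ)-2)/(2*(2-s)))) 2,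
              ← Real.rpow_natCast ((ε + ‖x‖ ^ (2-s)) ^ ((2-(N:ℝ))/(2-s))) 2,
              ← Real.rpow_mul hε.le, ← Real.rpow_mul hB.le]
          norm_num
      _ ≤ ε ^ ((((N:ℝ)-2)/(2*(2-s))) * 2)
            * (c * ε ^ (((2-(N:ℝ))/(2-s)) * 2) * (1 + ‖lam⁻¹ • x‖) ^ (-p)) := by
          rw [← hsplit]
          exact mul_le_mul_of_nonneg_left expand (Real.rpow_nonneg hε.le _)
      _ = c * (ε ^ ((((N:ℝ)-2)/(2*(2-s))) * 2) * ε ^ (((2-(N:ℝ))/(2-s)) * 2))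
            * (1 + ‖lam⁻¹ • x‖) ^ (-p) := by ring
      _ = c * ε ^ ((2-(N:ℝ))/(2-s)) * (1 + ‖lam⁻¹ • x‖) ^ (-p) := by
          rw [← Real.rpow_add hε]
          have hexp : (((N:ℝ)-2)/(2*(2-s))) * 2 + ((2-(N:ℝ))/(2-s)) * 2
              = (2-(N:ℝ))/(2-s) := by
            field_simp
            ring
          rw [hexp]
  -- integrability of the majorant
  have hgc : Integrable
      (fun x : EuclideanSpace ℝ (Fin N) =>
        c * ε ^ ((2-(N:ℝ))/(2-s)) * (1 + ‖lam⁻¹ • x‖) ^ (-p)) :=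
    (hg.comp_smul (inv_ne_zero hlam0.ne')).const_mul _
  have hmaj0 : ∀ x : EuclideanSpace ℝ (Fin N),
      0 ≤ c * ε ^ ((2-(N:ℝ))/(2-s)) * (1 + ‖lam⁻¹ • x‖) ^ (-p) := by
    intro x; positivity
  have hlamN : lam ^ (Module.finrank ℝ (EuclideanSpace ℝ (Fin N))) = ε ^ ((N:ℝ)/(2-s)) := by
    rw [finrank_euclideanSpace_fin, ← Real.rpow_natCast lam N, hlam,
        ← Real.rpow_mul hε.le]
    congr 1
    field_simp
  calc (∫ x in Metric.ball (0 : EuclideanSpace ℝ (Fin N)) R, U ε x ^ 2)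
      ≤ ∫ x in Metric.ball (0 : EuclideanSpace ℝ (Fin N)) R,
          c * ε ^ ((2-(N:ℝ))/(2-s)) * (1 + ‖lam⁻¹ • x‖) ^ (-p) :=
        integral_mono_of_nonneg (ae_of_all _ fun x => sq_nonneg _)
          hgc.restrict (ae_of_all _ fun x => hpt x)
    _ ≤ ∫ x : EuclideanSpace ℝ (Fin N),
          c * ε ^ ((2-(N:ℝ))/(2-s)) * (1 + ‖lam⁻¹ • x‖) ^ (-p) :=
        setIntegral_le_integral hgc (ae_of_all _ fun x => hmaj0 x)
    _ = c * ε ^ ((2-(N:ℝ))/(2-s))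
          * ∫ x : EuclideanSpace ℝ (Fin N), (1 + ‖lam⁻¹ • x‖) ^ (-p) :=
        integral_const_mul _ _
    _ = c * ε ^ ((2-(N:ℝ))/(2-s)) * (ε ^ ((N:ℝ)/(2-s)) * C₀) := by
        rw [Measure.integral_comp_inv_smul_of_nonneg volume
            (fun y : EuclideanSpace ℝ (Fin N) => (1 + ‖y‖) ^ (-p)) hlam0.le,
            smul_eq_mul, hlamN]
    _ = c * C₀ * ε ^ (2/(2-s)) := by
        rw [mul_assoc, ← mul_assoc (ε ^ ((2-(N:ℝ))/(2-s))), ← Real.rpow_add hε]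
        rw [← add_div]
        ring_nf
    _ ≤ (c * C₀ + 1) * ε ^ (2/(2-s)) := by
        have : (0:ℝ) < ε ^ (2/(2-s)) := Real.rpow_pos_of_pos hε _
        nlinarith
end

section
/- Let N = 4, 0 < s < 2, and for ε ∈ (0, 1/2) define U_ε(x) = ε^(1/(2−s)) (ε + |x|^(2−s))^(−2/(2−s)) on ℝ⁴. Then for any fixed R > 0 there exists C > 0 such that ∫_{B_R(0)} U_ε(x)² dx ≤ C ε^(2/(2−s)) |ln ε| for all ε ∈ (0, 1/2). -/
open MeasureTheory

open Set Real

lemma oneD (s ε R : ℝ) (hs2 : s < 2) (hε : 0 < ε) (hε2 : ε < 1/2) (hR : 0 < R) :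
    ∫ y in Set.Ioo (0:ℝ) R, y ^ 3 * (ε + y ^ (2 - s)) ^ (-(4 / (2 - s)))
      ≤ 1/4 + |Real.log R| + (1/(2-s)) * |Real.log ε| := by
  have h2s : (0:ℝ) < 2 - s := by linarith
  have hexp : (0:ℝ) ≤ 4 / (2 - s) := div_nonneg (by norm_num) h2s.le
  set r0 : ℝ := ε ^ (1 / (2 - s)) with hr0
  have hr0pos : 0 < r0 := Real.rpow_pos_of_pos hε _
  set m : ℝ := min r0 R with hm
  have hmpos : 0 < m := lt_min hr0pos hR
  have hmR : m ≤ R := min_le_right _ _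
  set φ : ℝ → ℝ := fun y => y ^ 3 * (ε + y ^ (2 - s)) ^ (-(4 / (2 - s))) with hφ
  have hcont : ContinuousOn φ (Icc 0 R) := by
    apply ContinuousOn.mul (by fun_prop)
    apply ContinuousOn.rpow_const
    · exact continuousOn_const.add
        (fun y hy => (Real.continuousAt_rpow_const y (2-s) (Or.inr h2s.le)).continuousWithinAt)
    · intro y hy
      left
      have : 0 ≤ y ^ (2 - s) := Real.rpow_nonneg hy.1 _
      positivity
  have hint : IntegrableOn φ (Icc 0 R) := hcont.integrableOn_Icc
  have hint1 : IntegrableOn φ (Ioo 0 m) := hint.mono_set (fun y hy => ⟨hy.1.le, hy.2.le.trans hmR⟩)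
  have hint2 : IntegrableOn φ (Ico m R) := hint.mono_set (fun y hy => ⟨hmpos.le.trans hy.1, hy.2.le⟩)
  have hsplit : Ioo (0:ℝ) R = Ioo 0 m ∪ Ico m R := (Set.Ioo_union_Ico_eq_Ioo hmpos hmR).symm
  have hdisj : Disjoint (Ioo (0:ℝ) m) (Ico m R) := by
    rw [Set.disjoint_left]
    intro y hy1 hy2
    exact absurd hy2.1 (not_le.mpr hy1.2)
  rw [hsplit, setIntegral_union hdisj measurableSet_Ico hint1 hint2]
  have hb1 : ∫ y in Ioo (0:ℝ) m, φ y ≤ 1/4 := by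
    have hmaj : ∀ y ∈ Ioo (0:ℝ) m, φ y ≤ y ^ 3 * ε ^ (-(4 / (2 - s))) := by
      intro y hy
      apply mul_le_mul_of_nonneg_left _ (pow_nonneg hy.1.le _)
      apply Real.rpow_le_rpow_of_nonpos hε
      · have : 0 ≤ y ^ (2 - s) := Real.rpow_nonneg hy.1.le _
        linarith
      · exact neg_nonpos.mpr hexp
    have hintmaj : IntegrableOn (fun y => y ^ 3 * ε ^ (-(4 / (2 - s)))) (Ioo 0 m) := by
      have : Continuous (fun y : ℝ => y ^ 3 * ε ^ (-(4 / (2 - s)))) := by fun_prop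
      exact (this.continuousOn.integrableOn_Icc).mono_set Set.Ioo_subset_Icc_self
    have key : r0 ^ 4 * ε ^ (-(4 / (2 - s))) = 1 := by
      rw [hr0, ← Real.rpow_natCast (ε ^ (1/(2-s))) 4, ← Real.rpow_mul hε.le,
        ← Real.rpow_add hε]
      have h4 : 1 / (2 - s) * ((4:ℕ):ℝ) + -(4 / (2 - s)) = 0 := by
        push_cast; field_simp; ring
      rw [h4, Real.rpow_zero]
    calc ∫ y in Ioo (0:ℝ) m, φ y ≤ ∫ y in Ioo (0:ℝ) m, y ^ 3 * ε ^ (-(4 / (2 - s))) :=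
          setIntegral_mono_on hint1 hintmaj measurableSet_Ioo hmaj
      _ = (∫ y in Ioo (0:ℝ) m, y ^ 3) * ε ^ (-(4 / (2 - s))) := by
          rw [integral_mul_const]
      _ = (m ^ 4 / 4) * ε ^ (-(4 / (2 - s))) := by
          rw [← MeasureTheory.integral_Ioc_eq_integral_Ioo,
            ← intervalIntegral.integral_of_le hmpos.le, integral_pow]
          norm_num
      _ ≤ (r0 ^ 4 / 4) * ε ^ (-(4 / (2 - s))) := by
          have h1 : m ^ 4 ≤ r0 ^ 4 := pow_le_pow_left₀ hmpos.le (min_le_left _ _) 4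
          have h2 : (0:ℝ) ≤ ε ^ (-(4 / (2 - s))) := Real.rpow_nonneg hε.le _
          exact mul_le_mul_of_nonneg_right (by linarith) h2
      _ = 1/4 := by
          rw [div_mul_eq_mul_div, key]
  have hb2 : ∫ y in Ico m R, φ y ≤ |Real.log R| + (1/(2-s)) * |Real.log ε| := by
    have hmaj : ∀ y ∈ Ico m R, φ y ≤ 1 / y := by
      intro y hy
      have hy0 : 0 < y := hmpos.trans_le hy.1
      have h1 : (ε + y ^ (2 - s)) ^ (-(4 / (2 - s))) ≤ (y ^ (2 - s)) ^ (-(4 / (2 - s))) := by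
        exact Real.rpow_le_rpow_of_nonpos (Real.rpow_pos_of_pos hy0 _) (by linarith)
          (neg_nonpos.mpr hexp)
      have h2 : (y ^ (2 - s) : ℝ) ^ (-(4 / (2 - s))) = y ^ (-(4:ℝ)) := by
        rw [← Real.rpow_mul hy0.le]
        congr 1
        field_simp
      calc φ y ≤ y ^ 3 * y ^ (-(4:ℝ)) := by
            rw [← h2]; exact mul_le_mul_of_nonneg_left h1 (by positivity)
        _ = 1 / y := by
            rw [← Real.rpow_natCast y 3, ← Real.rpow_add hy0]
            norm_num
            rw [Real.rpow_neg_one, inv_eq_one_div]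
    have hintmaj : IntegrableOn (fun y : ℝ => 1 / y) (Ico m R) := by
      have : ContinuousOn (fun y : ℝ => 1 / y) (Icc m R) :=
        ContinuousOn.div continuousOn_const continuousOn_id
          (fun y hy => (hmpos.trans_le hy.1).ne')
      exact this.integrableOn_Icc.mono_set Set.Ico_subset_Icc_self
    have h0not : (0:ℝ) ∉ Set.uIcc m R := Set.notMem_uIcc_of_lt hmpos hR
    have hval : ∫ y in Ico m R, (1:ℝ) / y = Real.log (R / m) := by
      rw [MeasureTheory.integral_Ico_eq_integral_Ioo,
        ← MeasureTheory.integral_Ioc_eq_integral_Ioo,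
        ← intervalIntegral.integral_of_le hmR, integral_one_div h0not]
    have hbound : Real.log (R / m) ≤ |Real.log R| + (1/(2-s)) * |Real.log ε| := by
      have habs : |Real.log ε| = -Real.log ε := abs_of_neg (Real.log_neg hε (by linarith))
      have hc : (0:ℝ) ≤ 1/(2-s) := by positivity
      rcases le_total r0 R with h | h
      · have hmr : m = r0 := min_eq_left h
        rw [hmr, Real.log_div hR.ne' hr0pos.ne', hr0, Real.log_rpow hε]
        have := le_abs_self (Real.log R)
        nlinarith [abs_nonneg (Real.log ε)]
      · have hmr : m = R := min_eq_right h
        rw [hmr, div_self hR.ne', Real.log_one]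
        have := abs_nonneg (Real.log R)
        nlinarith [abs_nonneg (Real.log ε)]
    calc ∫ y in Ico m R, φ y ≤ ∫ y in Ico m R, 1 / y :=
          setIntegral_mono_on hint2 hintmaj measurableSet_Ico hmaj
      _ = Real.log (R / m) := hval
      _ ≤ _ := hbound
  linarith

/-- L² estimate for the truncated extremal profile in dimension N = 4:
∫_{B_R} U_ε² ≤ C ε^{2/(2−s)} |ln ε|. -/
theorem stmt_10 (s : ℝ) (hs : 0 < s) (hs2 : s < 2)
    (U : ℝ → EuclideanSpace ℝ (Fin 4) → ℝ)
    (hU : ∀ ε ∈ Set.Ioo (0 : ℝ) (1 / 2), ∀ x, U ε x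
      = ε ^ (1 / (2 - s)) * (ε + ‖x‖ ^ (2 - s)) ^ (-(2 / (2 - s))))
    (R : ℝ) (hR : 0 < R) :
    ∃ C > (0 : ℝ), ∀ ε ∈ Set.Ioo (0 : ℝ) (1 / 2),
      (∫ x in Metric.ball (0 : EuclideanSpace ℝ (Fin 4)) R, U ε x ^ 2)
        ≤ C * ε ^ (2 / (2 - s)) * |Real.log ε| := by
  have h2s : (0:ℝ) < 2 - s := by linarith
  set V : ℝ := (volume (Metric.ball (0 : EuclideanSpace ℝ (Fin 4)) 1)).toReal with hV
  have hVpos : 0 < V := ENNReal.toReal_pos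
    (Metric.measure_ball_pos volume 0 one_pos).ne' measure_ball_lt_top.ne
  set K : ℝ := (1/4 + |Real.log R|) / Real.log 2 + 1/(2-s) with hK
  have hlog2 : (0:ℝ) < Real.log 2 := Real.log_pos one_lt_two
  have hKpos : 0 < K := by
    have ha : (0:ℝ) ≤ (1/4 + |Real.log R|) / Real.log 2 := by positivity
    have hb : (0:ℝ) < 1/(2-s) := by positivity
    rw [hK]; linarith
  refine ⟨4 * V * K, by positivity, ?_⟩
  rintro ε ⟨hε, hε2⟩
  have hlogε : Real.log 2 ≤ |Real.log ε| := by
    have h1 : Real.log ε < 0 := Real.log_neg hε (by linarith)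
    have h2 : Real.log ε ≤ Real.log (1/2) := Real.log_le_log hε hε2.le
    rw [abs_of_neg h1]
    rw [Real.log_div one_ne_zero two_ne_zero, Real.log_one] at h2
    linarith
  set F : ℝ → ℝ := fun r => (ε ^ (1 / (2 - s)) * (ε + r ^ (2 - s)) ^ (-(2 / (2 - s)))) ^ 2 with hF
  have step1 : (∫ x in Metric.ball (0 : EuclideanSpace ℝ (Fin 4)) R, U ε x ^ 2)
      = ∫ x : EuclideanSpace ℝ (Fin 4), (Set.indicator (Set.Iio R) F) ‖x‖ := by
    have h1 : ∀ x : EuclideanSpace ℝ (Fin 4), U ε x ^ 2 = F ‖x‖ := fun x => by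
      rw [hU ε ⟨hε, hε2⟩]
    simp only [h1]
    rw [← integral_indicator measurableSet_ball]
    congr 1
    ext x
    by_cases h : ‖x‖ < R
    · simp [Set.indicator_apply, Metric.mem_ball, dist_zero_right, Set.mem_Iio, h]
    · simp [Set.indicator_apply, Metric.mem_ball, dist_zero_right, Set.mem_Iio, h]
  have hdim : Module.finrank ℝ (EuclideanSpace ℝ (Fin 4)) = 4 := by
    simp [finrank_euclideanSpace]
  have step2 : (∫ x : EuclideanSpace ℝ (Fin 4), (Set.indicator (Set.Iio R) F) ‖x‖)
      = 4 * V * ∫ y in Set.Ioi (0:ℝ), y ^ 3 * (Set.indicator (Set.Iio R) F) y := by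
    rw [MeasureTheory.integral_fun_norm_addHaar volume (Set.indicator (Set.Iio R) F), hdim]
    simp only [smul_eq_mul, nsmul_eq_mul]
    push_cast
    rw [measureReal_def, ← hV]
    ring
  have step3 : (∫ y in Set.Ioi (0:ℝ), y ^ 3 * (Set.indicator (Set.Iio R) F) y)
      = ∫ y in Set.Ioo (0:ℝ) R, y ^ 3 * F y := by
    have h1 : ∀ y : ℝ, y ^ 3 * (Set.indicator (Set.Iio R) F) y
        = Set.indicator (Set.Iio R) (fun y => y ^ 3 * F y) y := fun y => by
      by_cases h : y ∈ Set.Iio R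
      · simp [Set.indicator_of_mem h]
      · simp [Set.indicator_of_notMem h]
    simp only [h1]
    rw [MeasureTheory.setIntegral_indicator measurableSet_Iio, Set.Ioi_inter_Iio]
  have step4 : (∫ y in Set.Ioo (0:ℝ) R, y ^ 3 * F y)
      = ε ^ (2/(2-s)) * ∫ y in Set.Ioo (0:ℝ) R, y ^ 3 * (ε + y ^ (2 - s)) ^ (-(4 / (2 - s))) := by
    rw [← MeasureTheory.integral_const_mul]
    apply setIntegral_congr_fun measurableSet_Ioo
    intro y hy
    have hA : 0 < ε + y ^ (2 - s) := by
      have : 0 ≤ y ^ (2 - s) := Real.rpow_nonneg hy.1.le _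
      linarith
    simp only [hF]
    rw [mul_pow, ← Real.rpow_natCast (ε ^ (1/(2-s))) 2, ← Real.rpow_mul hε.le,
      ← Real.rpow_natCast ((ε + y ^ (2 - s)) ^ (-(2 / (2 - s)))) 2, ← Real.rpow_mul hA.le]
    push_cast
    rw [show 1 / (2 - s) * 2 = 2 / (2-s) by ring, show -(2 / (2 - s)) * 2 = -(4 / (2-s)) by ring]
    ring
  rw [step1, step2, step3, step4]
  have hI := oneD s ε R hs2 hε hε2 hR
  have hIK : (∫ y in Set.Ioo (0:ℝ) R, y ^ 3 * (ε + y ^ (2 - s)) ^ (-(4 / (2 - s))))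
      ≤ K * |Real.log ε| := by
    have h1 : 1/4 + |Real.log R| ≤ (1/4 + |Real.log R|) / Real.log 2 * |Real.log ε| := by
      rw [div_mul_eq_mul_div, le_div_iff₀ hlog2]
      have h0 : (0:ℝ) ≤ 1/4 + |Real.log R| := by positivity
      nlinarith
    rw [hK]
    nlinarith [abs_nonneg (Real.log ε)]
  calc 4 * V * (ε ^ (2/(2-s)) * ∫ y in Set.Ioo (0:ℝ) R, y ^ 3 * (ε + y ^ (2 - s)) ^ (-(4 / (2 - s))))
      ≤ 4 * V * (ε ^ (2/(2-s)) * (K * |Real.log ε|)) := by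
        have hε' : (0:ℝ) ≤ ε ^ (2/(2-s)) := Real.rpow_nonneg hε.le _
        have hmm : ε ^ (2/(2-s)) * (∫ y in Set.Ioo (0:ℝ) R, y ^ 3 * (ε + y ^ (2 - s)) ^ (-(4 / (2 - s))))
            ≤ ε ^ (2/(2-s)) * (K * |Real.log ε|) := mul_le_mul_of_nonneg_left hIK hε'
        nlinarith [hVpos.le]
    _ = 4 * V * K * ε ^ (2/(2-s)) * |Real.log ε| := by ring
end
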